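/- The set G = {1 + 2^{-√ℓ} : ℓ ∈ ℕ, ℓ ≥ 1} ⊆ [1,2] has upper Minkowski dimension 0 and Assouad dimension 1. -/

import Mathlib

set_option maxHeartbeats 1000000

/-- Minimal number of closed intervals of length `δ` needed to cover `E`. -/
noncomputable def covN (E : Set ℝ) (δ : ℝ) : ℕ :=
  sInf {n : ℕ | ∃ c : Fin n → ℝ, E ⊆ ⋃ i, Set.Icc (c i) (c i + δ)}

/-- Upper Minkowski dimension. -/
noncomputable def dimM (E : Set ℝ) : ℝ :=
  sInf {a : ℝ | 0 < a ∧ ∃ C : ℝ, 0 < C ∧ ∀ δ : ℝ, 0 < δ → δ < 1 →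
    (covN E δ : ℝ) ≤ C * δ ^ (-a)}

/-- Assouad dimension. -/
noncomputable def dimA (E : Set ℝ) : ℝ :=
  sInf {a : ℝ | 0 < a ∧ ∃ C : ℝ, 0 < C ∧ ∀ x y δ : ℝ, 0 < δ → δ < y - x →
    (covN (E ∩ Set.Icc x y) δ : ℝ) ≤ C * ((y - x) / δ) ^ a}

/-- The set `{1 + 2^{-√ℓ} : ℓ ∈ ℕ, ℓ ≥ 1}`. -/
noncomputable def Gset : Set ℝ := {x | ∃ ℓ : ℕ, 1 ≤ ℓ ∧ x = 1 + 2 ^ (-Real.sqrt ℓ)}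


lemma covN_le_of_cover {E : Set ℝ} {δ : ℝ} {n : ℕ} (c : Fin n → ℝ)
    (h : E ⊆ ⋃ i, Set.Icc (c i) (c i + δ)) : covN E δ ≤ n :=
  Nat.sInf_le ⟨c, h⟩

lemma cover_Icc (x y δ : ℝ) (hδ : 0 < δ) :
    Set.Icc x y ⊆ ⋃ i : Fin (⌊(y - x) / δ⌋₊ + 1), Set.Icc (x + i * δ) (x + i * δ + δ) := by
  intro z hz
  obtain ⟨hz1, hz2⟩ := hz
  have h0 : (0:ℝ) ≤ (z - x) / δ := div_nonneg (by linarith) hδ.le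
  refine Set.mem_iUnion.2 ⟨⟨⌊(z - x) / δ⌋₊, ?_⟩, ?_, ?_⟩
  · have : ⌊(z - x) / δ⌋₊ ≤ ⌊(y - x) / δ⌋₊ :=
      Nat.floor_le_floor (by gcongr <;> linarith)
    omega
  · have := Nat.floor_le h0
    have h2 : (⌊(z - x) / δ⌋₊ : ℝ) * δ ≤ (z - x) / δ * δ :=
      mul_le_mul_of_nonneg_right this hδ.le
    rw [div_mul_cancel₀ _ hδ.ne'] at h2
    linarith
  · have := Nat.lt_floor_add_one ((z - x) / δ)
    have h2 : (z - x) / δ * δ ≤ ((⌊(z - x) / δ⌋₊ : ℝ) + 1) * δ :=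
      mul_le_mul_of_nonneg_right this.le hδ.le
    rw [div_mul_cancel₀ _ hδ.ne'] at h2
    linarith

lemma le_covN {E : Set ℝ} {δ : ℝ} (hδ : 0 < δ) {n : ℕ} (p : Fin n → ℝ)
    (hpE : ∀ i, p i ∈ E) (hsep : ∀ i j : Fin n, i ≠ j → δ < |p i - p j|)
    (hne : {k : ℕ | ∃ c : Fin k → ℝ, E ⊆ ⋃ i, Set.Icc (c i) (c i + δ)}.Nonempty) :
    n ≤ covN E δ := by
  obtain ⟨c, hc⟩ := Nat.sInf_mem hne
  have hmem : ∀ i : Fin n, ∃ k, p i ∈ Set.Icc (c k) (c k + δ) := fun i =>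
    Set.mem_iUnion.1 (hc (hpE i))
  choose f hf using hmem
  have hinj : Function.Injective f := by
    intro i j hij
    by_contra hne'
    have h1 := hf i
    have h2 := hf j
    rw [hij] at h1
    obtain ⟨h1a, h1b⟩ := h1
    obtain ⟨h2a, h2b⟩ := h2
    have : |p i - p j| ≤ δ := abs_sub_le_iff.2 ⟨by linarith, by linarith⟩
    exact absurd (hsep i j hne') (not_lt.2 this)
  simpa [covN] using Fintype.card_le_of_injective f hinj

lemma Gset_sub : Gset ⊆ Set.Icc 1 2 := by
  rintro x ⟨ℓ, hℓ, rfl⟩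
  have h1 : (0:ℝ) < 2 ^ (-Real.sqrt ℓ) := Real.rpow_pos_of_pos two_pos _
  have h2 : (2:ℝ) ^ (-Real.sqrt ℓ) ≤ 2 ^ (0:ℝ) :=
    Real.rpow_le_rpow_of_exponent_le one_le_two (neg_nonpos.2 (Real.sqrt_nonneg _))
  rw [Real.rpow_zero] at h2
  constructor <;> linarith

lemma covering_ne {E : Set ℝ} {x y δ : ℝ} (hδ : 0 < δ) (hE : E ⊆ Set.Icc x y) :
    {k : ℕ | ∃ c : Fin k → ℝ, E ⊆ ⋃ i, Set.Icc (c i) (c i + δ)}.Nonempty :=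
  ⟨_, fun i : Fin (⌊(y - x) / δ⌋₊ + 1) => x + i * δ, hE.trans (cover_Icc x y δ hδ)⟩

lemma covN_Gset_le {δ : ℝ} (hδ0 : 0 < δ) (hδ1 : δ < 1) :
    (covN Gset δ : ℝ) ≤ (Real.log δ⁻¹ / Real.log 2) ^ 2 + 2 := by
  set b : ℝ := Real.log δ⁻¹ / Real.log 2 with hb
  have hb0 : 0 ≤ b := div_nonneg (Real.log_nonneg (one_le_inv₀ hδ0 |>.2 hδ1.le)) (Real.log_nonneg one_le_two)
  set M : ℕ := ⌈b ^ 2⌉₊ with hM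
  have hcov : covN Gset δ ≤ M + 1 := by
    apply covN_le_of_cover (fun i : Fin (M + 1) =>
      if i.val = 0 then 1 else 1 + 2 ^ (-Real.sqrt i.val))
    rintro z ⟨ℓ, hℓ, rfl⟩
    by_cases hcase : ℓ ≤ M
    · refine Set.mem_iUnion.2 ⟨⟨ℓ, by omega⟩, ?_⟩
      simp only [if_neg (by omega : ¬ ℓ = 0)]
      constructor
      · simp
      · simp; linarith
    · refine Set.mem_iUnion.2 ⟨⟨0, by omega⟩, ?_⟩
      simp only [if_pos rfl]
      have hsmall : (2:ℝ) ^ (-Real.sqrt ℓ) ≤ δ := by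
        have h1 : b ^ 2 ≤ (ℓ : ℝ) := le_trans (Nat.le_ceil _) (by exact_mod_cast Nat.le_of_lt (by omega))
        have h2 : b ≤ Real.sqrt ℓ := by
          rw [← Real.sqrt_sq hb0]
          exact Real.sqrt_le_sqrt h1
        have h3 : (2:ℝ) ^ (-Real.sqrt ℓ) ≤ 2 ^ (-b) :=
          Real.rpow_le_rpow_of_exponent_le one_le_two (neg_le_neg h2)
        have h4 : (2:ℝ) ^ (-b) = δ := by
          rw [Real.rpow_def_of_pos two_pos, hb]
          rw [Real.log_inv]
          field_simp
          rw [Real.exp_log hδ0]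
        linarith
      have hpos : (0:ℝ) < 2 ^ (-Real.sqrt ℓ) := Real.rpow_pos_of_pos two_pos _
      constructor <;> simp <;> linarith
  calc (covN Gset δ : ℝ) ≤ M + 1 := by exact_mod_cast hcov
    _ ≤ b ^ 2 + 1 + 1 := by
        have := Nat.ceil_lt_add_one (by positivity : (0:ℝ) ≤ b ^ 2)
        push_cast; linarith
    _ = b ^ 2 + 2 := by ring

lemma dimM_mem {a : ℝ} (ha : 0 < a) :
    a ∈ {a : ℝ | 0 < a ∧ ∃ C : ℝ, 0 < C ∧ ∀ δ : ℝ, 0 < δ → δ < 1 →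
      (covN Gset δ : ℝ) ≤ C * δ ^ (-a)} := by
  refine ⟨ha, 2 + 16 / (a ^ 2 * Real.log 2 ^ 2), by positivity, fun δ hδ0 hδ1 => ?_⟩
  have hlog2 : (0:ℝ) < Real.log 2 := Real.log_pos one_lt_two
  have hδinv : (1:ℝ) ≤ δ⁻¹ := one_le_inv₀ hδ0 |>.2 hδ1.le
  -- δ^(-a) ≥ 1
  have hone : (1:ℝ) ≤ δ ^ (-a) := by
    rw [← Real.rpow_zero δ]
    exact Real.rpow_le_rpow_of_exponent_ge hδ0 hδ1.le (by linarith)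
  -- log δ⁻¹ ≤ (4/a) * δ⁻¹ ^ (a/4)
  have hlogle : Real.log δ⁻¹ ≤ δ⁻¹ ^ (a / 4) / (a / 4) :=
    Real.log_le_rpow_div (by positivity) (by positivity)
  have hlognn : 0 ≤ Real.log δ⁻¹ := Real.log_nonneg hδinv
  have hsq : (Real.log δ⁻¹) ^ 2 ≤ (δ⁻¹ ^ (a / 4) / (a / 4)) ^ 2 := by
    apply pow_le_pow_left₀ hlognn hlogle
  have hrw : (δ⁻¹ ^ (a / 4) / (a / 4)) ^ 2 = (16 / a ^ 2) * δ ^ (-(a/2)) := by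
    rw [div_pow, ← Real.rpow_natCast (δ⁻¹ ^ (a/4)) 2, ← Real.rpow_mul (by positivity),
      ← Real.rpow_neg_one δ, ← Real.rpow_mul hδ0.le,
      (by push_cast; ring : (-1 : ℝ) * (a/4 * (2:ℕ)) = -(a/2))]
    field_simp
    ring
  have hhalf : δ ^ (-(a/2)) ≤ δ ^ (-a) :=
    Real.rpow_le_rpow_of_exponent_ge hδ0 hδ1.le (by linarith)
  have hbd : (Real.log δ⁻¹ / Real.log 2) ^ 2 ≤ (16 / (a ^ 2 * Real.log 2 ^ 2)) * δ ^ (-a) := by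
    rw [div_pow]
    rw [div_le_iff₀ (by positivity)]
    calc (Real.log δ⁻¹) ^ 2 ≤ (16 / a ^ 2) * δ ^ (-(a/2)) := hrw ▸ hsq
      _ ≤ (16 / a ^ 2) * δ ^ (-a) := by
          apply mul_le_mul_of_nonneg_left hhalf (by positivity)
      _ = 16 / (a ^ 2 * Real.log 2 ^ 2) * δ ^ (-a) * Real.log 2 ^ 2 := by
          field_simp
  calc (covN Gset δ : ℝ) ≤ (Real.log δ⁻¹ / Real.log 2) ^ 2 + 2 := covN_Gset_le hδ0 hδ1
    _ ≤ (16 / (a ^ 2 * Real.log 2 ^ 2)) * δ ^ (-a) + 2 * δ ^ (-a) := by linarith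
    _ = (2 + 16 / (a ^ 2 * Real.log 2 ^ 2)) * δ ^ (-a) := by ring

lemma dimM_Gset : dimM Gset = 0 := by
  have hbdd : BddBelow {a : ℝ | 0 < a ∧ ∃ C : ℝ, 0 < C ∧ ∀ δ : ℝ, 0 < δ → δ < 1 →
      (covN Gset δ : ℝ) ≤ C * δ ^ (-a)} := ⟨0, fun a ha => ha.1.le⟩
  have hle : ∀ ε : ℝ, 0 < ε → dimM Gset ≤ ε := fun ε hε => csInf_le hbdd (dimM_mem hε)
  have hge : 0 ≤ dimM Gset := le_csInf ⟨1, dimM_mem one_pos⟩ fun a ha => ha.1.le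
  by_contra h
  have h0 : 0 < dimM Gset := lt_of_le_of_ne hge (Ne.symm h)
  have := hle (dimM Gset / 2) (by linarith)
  linarith

lemma dimA_one_mem : (1:ℝ) ∈ {a : ℝ | 0 < a ∧ ∃ C : ℝ, 0 < C ∧ ∀ x y δ : ℝ, 0 < δ → δ < y - x →
    (covN (Gset ∩ Set.Icc x y) δ : ℝ) ≤ C * ((y - x) / δ) ^ a} := by
  refine ⟨one_pos, 2, two_pos, fun x y δ hδ0 hδr => ?_⟩
  have hcov : covN (Gset ∩ Set.Icc x y) δ ≤ ⌊(y - x) / δ⌋₊ + 1 :=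
    covN_le_of_cover _ ((Set.inter_subset_right).trans (cover_Icc x y δ hδ0))
  have hr1 : (1:ℝ) ≤ (y - x) / δ := (one_le_div hδ0).2 (by linarith)
  have hfl : (⌊(y - x) / δ⌋₊ : ℝ) ≤ (y - x) / δ := Nat.floor_le (by linarith)
  rw [Real.rpow_one]
  calc (covN (Gset ∩ Set.Icc x y) δ : ℝ) ≤ (⌊(y - x) / δ⌋₊ : ℝ) + 1 := by exact_mod_cast hcov
    _ ≤ 2 * ((y - x) / δ) := by linarith

lemma rpow_anti {s t : ℝ} (h : s ≤ t) : (2:ℝ) ^ (-t) ≤ 2 ^ (-s) :=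
  Real.rpow_le_rpow_of_exponent_le one_le_two (neg_le_neg h)

lemma dimA_lower {a : ℝ} (ha : a ∈ {a : ℝ | 0 < a ∧ ∃ C : ℝ, 0 < C ∧
    ∀ x y δ : ℝ, 0 < δ → δ < y - x →
    (covN (Gset ∩ Set.Icc x y) δ : ℝ) ≤ C * ((y - x) / δ) ^ a}) : 1 ≤ a := by
  obtain ⟨ha0, C, hC, h⟩ := ha
  by_contra hlt
  push_neg at hlt
  have h1a : 0 < 1 - a := by linarith
  set T : ℝ := C * 16 ^ a with hT
  have hT0 : 0 < T := by positivity
  obtain ⟨m, hm⟩ := exists_nat_gt (max 1 (T ^ (1 / (1 - a))))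
  have hm1' : (1:ℝ) < m := lt_of_le_of_lt (le_max_left _ _) hm
  have hm1 : 1 ≤ m := by exact_mod_cast hm1'.le
  have hmT : T ^ (1 / (1 - a)) < (m:ℝ) + 1 :=
    lt_of_le_of_lt (le_max_right _ _) (by linarith)
  set X : ℝ := 2 ^ (-(m:ℝ)) with hX
  have hX0 : 0 < X := Real.rpow_pos_of_pos two_pos _
  set hf : ℝ := 2 ^ (-(1/2):ℝ) with hhf
  have hhf0 : 0 < hf := Real.rpow_pos_of_pos two_pos _
  have hhf34 : hf ≤ 3/4 := by
    have h2 : hf ^ (2:ℕ) = 2⁻¹ := by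
      rw [hhf, ← Real.rpow_natCast ((2:ℝ) ^ (-(1/2):ℝ)) 2, ← Real.rpow_mul (by norm_num)]
      norm_num
    nlinarith [hhf0]
  set x : ℝ := 1 + X * hf with hxdef
  set y : ℝ := 1 + X with hydef
  set δ : ℝ := X / (16 * ((m:ℝ) + 1)) with hδdef
  have hδ0 : 0 < δ := by positivity
  have hyx : y - x = X * (1 - hf) := by rw [hxdef, hydef]; ring
  have hδyx : δ < y - x := by
    rw [hyx, hδdef]
    rw [div_lt_iff₀ (by positivity)]
    have hA : X ≤ X * (1 - hf) * 4 := by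
      nlinarith [mul_nonneg hX0.le (show (0:ℝ) ≤ 3/4 - hf by linarith)]
    have hpos : (0:ℝ) < X * (1 - hf) := mul_pos hX0 (by linarith)
    have hB : X * (1 - hf) * 4 < X * (1 - hf) * (16 * ((m:ℝ) + 1)) :=
      mul_lt_mul_of_pos_left (by linarith) hpos
    linarith
  -- the points
  set p : Fin (m+1) → ℝ := fun i => 1 + 2 ^ (-Real.sqrt ((m^2 + i.val : ℕ) : ℝ)) with hp
  -- sqrt bounds
  have hsqrt_lb : ∀ i : Fin (m+1), (m:ℝ) ≤ Real.sqrt ((m^2 + i.val : ℕ) : ℝ) := by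
    intro i
    rw [Real.le_sqrt (by positivity) (by positivity)]
    push_cast
    nlinarith [i.val.cast_nonneg (α := ℝ)]
  have hsqrt_ub : ∀ i : Fin (m+1), Real.sqrt ((m^2 + i.val : ℕ) : ℝ) ≤ (m:ℝ) + 1/2 := by
    intro i
    have hi : (i.val : ℝ) ≤ m := by exact_mod_cast Nat.lt_succ_iff.1 i.isLt
    have : ((m^2 + i.val : ℕ) : ℝ) ≤ ((m:ℝ) + 1/2)^2 := by push_cast; nlinarith
    calc Real.sqrt ((m^2 + i.val : ℕ) : ℝ) ≤ Real.sqrt (((m:ℝ) + 1/2)^2) :=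
          Real.sqrt_le_sqrt this
      _ = (m:ℝ) + 1/2 := Real.sqrt_sq (by positivity)
  -- membership
  have hpmem : ∀ i : Fin (m+1), p i ∈ Gset ∩ Set.Icc x y := by
    intro i
    refine ⟨⟨m^2 + i.val, by nlinarith [i.val.zero_le], rfl⟩, ?_, ?_⟩
    · rw [hp, hxdef]
      simp only
      have h1 : (2:ℝ) ^ (-((m:ℝ) + 1/2)) ≤ 2 ^ (-Real.sqrt ((m^2 + i.val : ℕ) : ℝ)) :=
        rpow_anti (hsqrt_ub i)
      have h2 : (2:ℝ) ^ (-((m:ℝ) + 1/2)) = X * hf := by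
        rw [hX, hhf, ← Real.rpow_add two_pos]
        ring_nf
      linarith
    · rw [hp, hydef]
      simp only
      have h1 : (2:ℝ) ^ (-Real.sqrt ((m^2 + i.val : ℕ) : ℝ)) ≤ 2 ^ (-(m:ℝ)) :=
        rpow_anti (hsqrt_lb i)
      linarith
  -- the key gap estimate
  have hgap : ∀ ℓ : ℕ, ℓ ≤ m^2 + m →
      X / (8 * ((m:ℝ) + 1)) ≤ 2 ^ (-Real.sqrt (ℓ:ℝ)) - 2 ^ (-Real.sqrt ((ℓ:ℝ)+1)) := by
    intro ℓ hℓ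
    set u : ℝ := Real.sqrt (ℓ:ℝ) with hu
    set v : ℝ := Real.sqrt ((ℓ:ℝ)+1) with hv
    have hu0 : 0 ≤ u := Real.sqrt_nonneg _
    have hv0 : 0 ≤ v := Real.sqrt_nonneg _
    have hu2 : u^2 = (ℓ:ℝ) := Real.sq_sqrt (by positivity)
    have hv2 : v^2 = (ℓ:ℝ)+1 := Real.sq_sqrt (by positivity)
    have hvub : v ≤ (m:ℝ) + 1 := by
      have hc : ((ℓ:ℝ)+1) ≤ ((m:ℝ)+1)^2 := by
        have : (ℓ:ℝ) ≤ (m:ℝ)^2 + m := by exact_mod_cast hℓ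
        nlinarith
      calc v ≤ Real.sqrt (((m:ℝ)+1)^2) := Real.sqrt_le_sqrt hc
        _ = (m:ℝ)+1 := Real.sqrt_sq (by positivity)
    have huv : u ≤ v := Real.sqrt_le_sqrt (by linarith)
    have hkey : (v - u) * (v + u) = 1 := by linear_combination hv2 - hu2
    have hD : 1 / (2*((m:ℝ)+1)) ≤ v - u := by
      rw [div_le_iff₀ (by positivity)]
      nlinarith [hkey, mul_nonneg (sub_nonneg.2 huv)
        (show (0:ℝ) ≤ 2*((m:ℝ)+1) - (v + u) by linarith)]
    -- 2^(v-u) - 1 ≥ (v-u)/2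
    have hexp : (v - u)/2 + 1 ≤ (2:ℝ) ^ (v - u) := by
      have hlog : (0.6931471803:ℝ) < Real.log 2 := Real.log_two_gt_d9
      have := Real.add_one_le_exp ((v - u) * Real.log 2)
      have hrw : (2:ℝ) ^ (v - u) = Real.exp ((v - u) * Real.log 2) := by
        rw [Real.rpow_def_of_pos two_pos]; ring_nf
      rw [hrw]
      nlinarith
    have hsplit : (2:ℝ) ^ (-u) = 2 ^ (-v) * 2 ^ (v - u) := by
      rw [← Real.rpow_add two_pos]; ring_nf
    have hlb : X / 2 ≤ (2:ℝ) ^ (-v) := by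
      have h1 : (2:ℝ) ^ (-((m:ℝ)+1)) ≤ 2 ^ (-v) := rpow_anti hvub
      have h2 : (2:ℝ) ^ (-((m:ℝ)+1)) = X / 2 := by
        rw [hX, show -((m:ℝ)+1) = -(m:ℝ) + (-1) by ring, Real.rpow_add two_pos,
          Real.rpow_neg_one]
        ring
      linarith
    have hpos_v : (0:ℝ) < 2 ^ (-v) := Real.rpow_pos_of_pos two_pos _
    have hstep : X / (8 * ((m:ℝ) + 1)) = (X/2) * (1/(2*((m:ℝ)+1)) / 2) := by
      rw [div_div, div_mul_div_comm, mul_one]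
      congr 1
      ring
    calc X / (8 * ((m:ℝ) + 1)) = (X/2) * (1/(2*((m:ℝ)+1)) / 2) := hstep
      _ ≤ (2:ℝ)^(-v) * ((v-u)/2) := by
          apply mul_le_mul hlb (by linarith) (by positivity) hpos_v.le
      _ ≤ (2:ℝ)^(-v) * (2^(v-u) - 1) := by
          apply mul_le_mul_of_nonneg_left (by linarith) hpos_v.le
      _ = 2 ^ (-u) - 2 ^ (-v) := by rw [hsplit]; ring
  have hδ2 : 2 * δ = X / (8*((m:ℝ)+1)) := by
    rw [hδdef, mul_div_assoc', div_eq_div_iff (by positivity) (by positivity)]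
    ring
  -- separation
  have key : ∀ i j : Fin (m+1), i < j → δ < p i - p j := by
    intro i j hij
    have hij' : i.val + 1 ≤ j.val := hij
    have hmono : (2:ℝ) ^ (-Real.sqrt ((m^2 + j.val : ℕ) : ℝ)) ≤
        2 ^ (-Real.sqrt (((m^2 + i.val : ℕ) : ℝ) + 1)) := by
      apply rpow_anti
      apply Real.sqrt_le_sqrt
      push_cast
      have : (i.val : ℝ) + 1 ≤ j.val := by exact_mod_cast hij'
      linarith
    have hg := hgap (m^2 + i.val) (by have := Nat.lt_succ_iff.1 j.isLt; omega)
    have hpe : p i - p j = 2 ^ (-Real.sqrt ((m^2 + i.val : ℕ) : ℝ))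
        - 2 ^ (-Real.sqrt ((m^2 + j.val : ℕ) : ℝ)) := by
      rw [hp]; ring
    rw [hpe]
    linarith
  have hsep : ∀ i j : Fin (m+1), i ≠ j → δ < |p i - p j| := by
    intro i j hij
    rcases lt_or_gt_of_ne hij with hlt' | hlt'
    · exact lt_of_lt_of_le (key i j hlt') (le_abs_self _)
    · exact lt_of_lt_of_le (key j i hlt')
        ((le_abs_self _).trans (abs_sub_comm (p j) (p i)).le)
  have hcovlow : m + 1 ≤ covN (Gset ∩ Set.Icc x y) δ :=
    le_covN hδ0 p hpmem hsep (covering_ne hδ0 Set.inter_subset_right)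
  have hcovup := h x y δ hδ0 hδyx
  have hyx0 : 0 < y - x := by linarith
  have hratio : (y - x)/δ ≤ 16*((m:ℝ)+1) := by
    rw [div_le_iff₀ hδ0, hyx, hδdef, mul_div_cancel₀ _ (by positivity : (16:ℝ)*((m:ℝ)+1) ≠ 0)]
    nlinarith [mul_nonneg hX0.le hhf0.le]
  have hratio_pos : 0 < (y - x)/δ := div_pos hyx0 hδ0
  have hrp : ((y-x)/δ) ^ a ≤ (16*((m:ℝ)+1)) ^ a :=
    Real.rpow_le_rpow hratio_pos.le hratio ha0.le
  have hmul : (16*((m:ℝ)+1)) ^ a = 16 ^ a * ((m:ℝ)+1) ^ a :=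
    Real.mul_rpow (by norm_num) (by positivity)
  have hfinal1 : ((m:ℝ)) + 1 ≤ T * ((m:ℝ)+1) ^ a := by
    have hc1 : ((m:ℝ)) + 1 ≤ (covN (Gset ∩ Set.Icc x y) δ : ℝ) := by
      exact_mod_cast Nat.cast_le.2 hcovlow
    have hc2 : (covN (Gset ∩ Set.Icc x y) δ : ℝ) ≤ C * (16 ^ a * ((m:ℝ)+1) ^ a) := by
      calc (covN (Gset ∩ Set.Icc x y) δ : ℝ) ≤ C * ((y-x)/δ) ^ a := hcovup
        _ ≤ C * (16*((m:ℝ)+1)) ^ a := mul_le_mul_of_nonneg_left hrp hC.le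
        _ = C * (16 ^ a * ((m:ℝ)+1) ^ a) := by rw [hmul]
    rw [hT]
    calc ((m:ℝ)) + 1 ≤ C * (16 ^ a * ((m:ℝ)+1) ^ a) := le_trans hc1 hc2
      _ = C * 16 ^ a * ((m:ℝ)+1) ^ a := by ring
  have hTlt : T < ((m:ℝ)+1) ^ (1-a) := by
    have h1 := Real.rpow_lt_rpow (Real.rpow_nonneg hT0.le _) hmT h1a
    rwa [← Real.rpow_mul hT0.le, one_div_mul_cancel h1a.ne', Real.rpow_one] at h1
  have hppos : (0:ℝ) < ((m:ℝ)+1) ^ a := Real.rpow_pos_of_pos (by positivity) _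
  have hlt2 : T * ((m:ℝ)+1) ^ a < ((m:ℝ)+1) ^ (1-a) * ((m:ℝ)+1) ^ a :=
    mul_lt_mul_of_pos_right hTlt hppos
  have hid : ((m:ℝ)+1) ^ (1-a) * ((m:ℝ)+1) ^ a = (m:ℝ)+1 := by
    rw [← Real.rpow_add (by positivity)]
    norm_num
  linarith

/-- The set `G = {1 + 2^{-√ℓ} : ℓ ≥ 1}` is contained in `[1,2]`, has upper Minkowski
dimension `0` and Assouad dimension `1`. -/
theorem stmt8 : Gset ⊆ Set.Icc 1 2 ∧ dimM Gset = 0 ∧ dimA Gset = 1 := by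
  refine ⟨Gset_sub, dimM_Gset, ?_⟩
  have hbdd : BddBelow {a : ℝ | 0 < a ∧ ∃ C : ℝ, 0 < C ∧ ∀ x y δ : ℝ, 0 < δ → δ < y - x →
      (covN (Gset ∩ Set.Icc x y) δ : ℝ) ≤ C * ((y - x) / δ) ^ a} := ⟨0, fun a ha => ha.1.le⟩
  exact le_antisymm (csInf_le hbdd dimA_one_mem)
    (le_csInf ⟨1, dimA_one_mem⟩ fun a ha => dimA_lower ha)
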